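/- Under the hypotheses of the persistence theorem (uniformly dissipative family ẋ = f(x,ε) with globally asymptotically and locally exponentially stable equilibrium x* of the unperturbed system, and the conclusion that for small ε there is a globally asymptotically stable equilibrium x*(ε) with x*(ε) → x*), for every η > 0 there exists ε** > 0 such that for all |ε| ≤ ε** and all x₀ ∈ Ω: dist(x_ε(x₀, t), x₀(x₀, t)) < η for all t ≥ 0, where x_ε and x₀ denote the solutions of the perturbed and unperturbed systems with the same initial condition x₀. -/
import Mathlib


open Filter

/-- **Uniform-in-time closeness of perturbed and unperturbed solutions.**
`φ ε t x₀` denotes the solution at time `t` of the `ε`-perturbed system with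
initial condition `x₀`; `xs ε` is the perturbed equilibrium. -/
theorem uniform_in_time_closeness {n : ℕ}
    (Ω : Set (Fin n → ℝ))
    (φ : ℝ → ℝ → (Fin n → ℝ) → (Fin n → ℝ))
    (xstar : Fin n → ℝ) (xs : ℝ → (Fin n → ℝ)) (hxs0 : xs 0 = xstar)
    -- (i) x* globally asymptotically stable for ε = 0, attraction uniform on Ω
    (hattr0 : ∀ δ > (0:ℝ), ∃ T : ℝ, ∀ x₀ ∈ Ω, ∀ t ≥ T, dist (φ 0 t x₀) xstar ≤ δ)
    -- (ii) for small ε, x*(ε) globally asymptotically stable, uniformly in x₀ and ε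
    (εstar : ℝ) (hεstar : 0 < εstar)
    (hattrε : ∀ δ > (0:ℝ), ∃ T : ℝ, ∀ ε : ℝ, |ε| ≤ εstar →
      ∀ x₀ ∈ Ω, ∀ t ≥ T, dist (φ ε t x₀) (xs ε) ≤ δ)
    -- (iii) x*(ε) → x* as ε → 0
    (hxs : Tendsto xs (nhds 0) (nhds xstar))
    -- (iv) continuous dependence on ε, uniformly on compact time intervals
    (hdep : ∀ T ≥ (0:ℝ), ∀ δ > (0:ℝ), ∃ ρ > (0:ℝ), ∀ ε : ℝ, |ε| < ρ →
      ∀ x₀ ∈ Ω, ∀ t ∈ Set.Icc 0 T, dist (φ ε t x₀) (φ 0 t x₀) < δ) :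
    ∀ η > (0:ℝ), ∃ εss > (0:ℝ), ∀ ε : ℝ, |ε| ≤ εss →
      ∀ x₀ ∈ Ω, ∀ t ≥ (0:ℝ), dist (φ ε t x₀) (φ 0 t x₀) < η := by
  intro η hη
  have hη4 : (0:ℝ) < η / 4 := by linarith
  obtain ⟨T0, hT0⟩ := hattr0 (η/4) hη4
  obtain ⟨Tε, hTε⟩ := hattrε (η/4) hη4
  set T : ℝ := max 0 (max T0 Tε) with hT
  have hT0le : T0 ≤ T := le_max_of_le_right (le_max_left _ _)
  have hTεle : Tε ≤ T := le_max_of_le_right (le_max_right _ _)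
  have hTnn : (0:ℝ) ≤ T := le_max_left _ _
  obtain ⟨ρ, hρ, hρ'⟩ := hdep T hTnn η hη
  have hev : ∀ᶠ ε in nhds (0:ℝ), dist (xs ε) xstar < η/4 :=
    Metric.tendsto_nhds.mp hxs (η/4) hη4
  obtain ⟨ε1, hε1, hε1'⟩ := Metric.eventually_nhds_iff_ball.mp hev
  refine ⟨min εstar (min (ρ/2) (ε1/2)), by positivity, fun ε hε x₀ hx₀ t ht => ?_⟩
  have hεs : |ε| ≤ εstar := le_trans hε (min_le_left _ _)
  have hερ : |ε| < ρ := lt_of_le_of_lt (le_trans hε (le_trans (min_le_right _ _) (min_le_left _ _))) (by linarith)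
  have hεε1 : dist ε 0 < ε1 := by
    rw [Real.dist_eq, sub_zero]
    exact lt_of_le_of_lt (le_trans hε (le_trans (min_le_right _ _) (min_le_right _ _))) (by linarith)
  rcases le_or_gt t T with htT | htT
  · exact hρ' ε hερ x₀ hx₀ t ⟨ht, htT⟩
  · have h1 : dist (φ ε t x₀) (xs ε) ≤ η/4 := hTε ε hεs x₀ hx₀ t (le_of_lt (lt_of_le_of_lt hTεle htT))
    have h2 : dist (xs ε) xstar < η/4 := hε1' ε (Metric.mem_ball.mpr hεε1)
    have h3 : dist (φ 0 t x₀) xstar ≤ η/4 := hT0 x₀ hx₀ t (le_of_lt (lt_of_le_of_lt hT0le htT))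
    calc dist (φ ε t x₀) (φ 0 t x₀)
        ≤ dist (φ ε t x₀) (xs ε) + dist (xs ε) xstar + dist xstar (φ 0 t x₀) :=
          dist_triangle4 _ _ _ _
      _ < η := by rw [dist_comm xstar]; linarith
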